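/- Let $z \in \mathbb{C}^4$ and suppose there is a partition $\{i_1,i_2\} \sqcup \{i_3,i_4\} = \{1,2,3,4\}$ with $|z_{i_1}| = |z_{i_2}| = r$ and $|z_{i_3}| = |z_{i_4}| = s$. Then $\|z\|_{\mathsf{X}} = 2\sqrt{r^2 + s^2 + 2rs|\cos(\phi_z/2)|}$, where $\phi_z$ is the phase difference of $z$. -/

import Mathlib

open Complex Real

lemma term_eq (w₁ w₂ : ℂ) (σ : ℝ) :
    ‖w₁ * Complex.exp (σ * Complex.I) + (starRingEnd ℂ) w₂‖
      = Real.sqrt ((‖w₁‖)^2 + (‖w₂‖)^2 +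
          2 * ‖w₁‖ * ‖w₂‖ * Real.cos (σ + (Complex.arg w₁ + Complex.arg w₂))) := by
  set A := ‖w₁‖ with hA
  set B := ‖w₂‖ with hB
  set a := Complex.arg w₁ with ha
  set b := Complex.arg w₂ with hb
  have e₁ : w₁ = (A : ℂ) * Complex.exp (a * I) := (Complex.norm_mul_exp_arg_mul_I w₁).symm
  have e₂ : w₂ = (B : ℂ) * Complex.exp (b * I) := (Complex.norm_mul_exp_arg_mul_I w₂).symm
  rw [e₁, e₂, Complex.norm_def, Complex.normSq_apply]
  have hre : (((A : ℂ) * Complex.exp (a * I) * Complex.exp (σ * I) +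
      (starRingEnd ℂ) ((B : ℂ) * Complex.exp (b * I)))).re
      = A * Real.cos (a + σ) + B * Real.cos b := by
    simp [Complex.add_re, Complex.mul_re, Complex.exp_ofReal_mul_I_re,
      Complex.exp_ofReal_mul_I_im, ← Complex.exp_add, ← Complex.ofReal_add,
      Real.cos_add, Real.sin_add]
    ring
  have him : (((A : ℂ) * Complex.exp (a * I) * Complex.exp (σ * I) +
      (starRingEnd ℂ) ((B : ℂ) * Complex.exp (b * I)))).im
      = A * Real.sin (a + σ) - B * Real.sin b := by
    simp [Complex.add_im, Complex.mul_im, Complex.exp_ofReal_mul_I_re,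
      Complex.exp_ofReal_mul_I_im, ← Complex.exp_add, ← Complex.ofReal_add,
      Real.cos_add, Real.sin_add]
    ring
  rw [hre, him]
  congr 1
  have h1 := Real.sin_sq_add_cos_sq (a + σ)
  have h2 := Real.sin_sq_add_cos_sq b
  have h3 : Real.cos (σ + (a + b)) = Real.cos ((a + σ) + b) := by ring_nf
  rw [h3, Real.cos_add (a+σ) b]
  nlinarith [h1, h2]

lemma exists_cos_sin {x y : ℝ} (h : x^2 + y^2 = 1) : ∃ θ : ℝ, Real.cos θ = x ∧ Real.sin θ = y := by
  have hz : (⟨x, y⟩ : ℂ) ≠ 0 := by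
    intro h0
    rw [Complex.ext_iff] at h0
    simp at h0
    nlinarith [h0.1, h0.2]
  have habs : ‖(⟨x, y⟩ : ℂ)‖ = 1 := by
    rw [Complex.norm_def, Complex.normSq_mk]
    rw [show x * x + y * y = 1 by nlinarith]
    exact Real.sqrt_one
  refine ⟨Complex.arg ⟨x, y⟩, ?_, ?_⟩
  · rw [Complex.cos_arg hz, habs]; simp
  · rw [Complex.sin_arg, habs]; simp

lemma bound1 (a b u t w e : ℝ) (h1 : u^2+t^2=1) (h2 : w^2+e^2=1) :
    (a*u + b*(u*w - t*e))^2 ≤ a^2+b^2+2*a*b*w := by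
  nlinarith [sq_nonneg ((a+b*w)*t + b*e*u), sq_nonneg (a+b*w), sq_nonneg (b*e), sq_nonneg b, h1, h2]

set_option maxHeartbeats 1600000 in
lemma key_ineq (r s θ δ : ℝ) (hr : 0 ≤ r) (hs : 0 ≤ s) :
    (2*r*|Real.cos θ| + 2*s*|Real.cos (θ+δ)|)^2 ≤ 4*(r^2+s^2+2*r*s*|Real.cos δ|) := by
  have hc : Real.cos (θ + δ) = Real.cos θ * Real.cos δ - Real.sin θ * Real.sin δ := Real.cos_add θ δ
  have h1 := Real.sin_sq_add_cos_sq θ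
  have h2 := Real.sin_sq_add_cos_sq δ
  have h1' : Real.cos θ ^2 + Real.sin θ ^2 = 1 := by linarith
  have h2' : Real.cos δ ^2 + Real.sin δ ^2 = 1 := by linarith
  have hrs : 0 ≤ r * s := mul_nonneg hr hs
  have Bpp := bound1 (2*r) (2*s) (Real.cos θ) (Real.sin θ) (Real.cos δ) (Real.sin δ) h1' h2'
  have Bpm := bound1 (2*r) (-(2*s)) (Real.cos θ) (Real.sin θ) (Real.cos δ) (Real.sin δ) h1' h2'
  have Bmp := bound1 (-(2*r)) (2*s) (Real.cos θ) (Real.sin θ) (Real.cos δ) (Real.sin δ) h1' h2'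
  have Bmm := bound1 (-(2*r)) (-(2*s)) (Real.cos θ) (Real.sin θ) (Real.cos δ) (Real.sin δ) h1' h2'
  rw [hc]
  rcases abs_cases (Real.cos θ) with ⟨e1,s1⟩|⟨e1,s1⟩ <;>
  rcases abs_cases (Real.cos θ * Real.cos δ - Real.sin θ * Real.sin δ) with ⟨e2,s2⟩|⟨e2,s2⟩ <;>
  rcases abs_cases (Real.cos δ) with ⟨e3,s3⟩|⟨e3,s3⟩ <;>
  rw [e1, e2, e3] <;>
  nlinarith [Bpp, Bpm, Bmp, Bmm, hrs, mul_nonneg hrs (abs_nonneg (Real.cos δ))]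

lemma core_aligned (r s α β : ℝ) (hr : 0 ≤ r) (hs : 0 ≤ s) :
    IsGreatest (Set.range fun σ => Real.sqrt (r^2+r^2+2*r*r*Real.cos (σ+α)) +
        Real.sqrt (s^2+s^2+2*s*s*Real.cos (σ+β)))
      (2*Real.sqrt (r^2+s^2+2*r*s*|Real.cos ((α-β)/2)|)) := by
  have hF : ∀ (u:ℝ), 0 ≤ u → ∀ x:ℝ,
      Real.sqrt (u^2+u^2+2*u*u*Real.cos x) = 2*u*|Real.cos (x/2)| := by
    intro u hu x
    have hh := Real.cos_sq (x/2)
    rw [show 2*(x/2) = x by ring] at hh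
    have h : u^2+u^2+2*u*u*Real.cos x = (2*u*|Real.cos (x/2)|)^2 := by
      rw [mul_pow, mul_pow, _root_.sq_abs]
      nlinarith [hh]
    rw [h, Real.sqrt_sq (by positivity)]
  have hcδ : |Real.cos ((α-β)/2)| = |Real.cos ((β-α)/2)| := by
    rw [show (α-β)/2 = -((β-α)/2) by ring, Real.cos_neg]
  rw [hcδ]
  set δ := (β-α)/2 with hδ
  set X := r^2+s^2+2*r*s*|Real.cos δ| with hX
  have hXnn : 0 ≤ X := by positivity
  have heq : (fun σ => Real.sqrt (r^2+r^2+2*r*r*Real.cos (σ+α)) +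
      Real.sqrt (s^2+s^2+2*s*s*Real.cos (σ+β)))
      = fun σ => 2*r*|Real.cos ((σ+α)/2)| + 2*s*|Real.cos ((σ+α)/2 + δ)| := by
    funext σ
    rw [hF r hr, hF s hs, show (σ+β)/2 = (σ+α)/2 + δ by rw [hδ]; ring]
  rw [heq]
  have hs4 : Real.sqrt (4*X) = 2*Real.sqrt X := by
    rw [show (4:ℝ)*X = 2^2*X by ring, Real.sqrt_mul (by positivity), Real.sqrt_sq (by norm_num)]
  have hub : ∀ σ:ℝ, 2*r*|Real.cos ((σ+α)/2)| + 2*s*|Real.cos ((σ+α)/2 + δ)| ≤ 2*Real.sqrt X := by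
    intro σ
    have hf0 : 0 ≤ 2*r*|Real.cos ((σ+α)/2)| + 2*s*|Real.cos ((σ+α)/2+δ)| := by positivity
    calc 2*r*|Real.cos ((σ+α)/2)| + 2*s*|Real.cos ((σ+α)/2+δ)|
        = Real.sqrt ((2*r*|Real.cos ((σ+α)/2)| + 2*s*|Real.cos ((σ+α)/2+δ)|)^2) :=
          (Real.sqrt_sq hf0).symm
      _ ≤ Real.sqrt (4*X) := Real.sqrt_le_sqrt (key_ineq r s ((σ+α)/2) δ hr hs)
      _ = 2*Real.sqrt X := hs4
  constructor
  · by_cases h0 : X = 0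
    · rw [hX] at h0
      have h1 : r ≤ 0 := by
        nlinarith [mul_nonneg (mul_nonneg hr hs) (abs_nonneg (Real.cos δ)), sq_nonneg s]
      have h2 : s ≤ 0 := by
        nlinarith [mul_nonneg (mul_nonneg hr hs) (abs_nonneg (Real.cos δ)), sq_nonneg r]
      have hr0 : r = 0 := le_antisymm h1 hr
      have hs0 : s = 0 := le_antisymm h2 hs
      refine ⟨0, ?_⟩
      simp only [hr0, hs0, hX]
      norm_num
    · have hXpos : 0 < X := lt_of_le_of_ne hXnn (Ne.symm h0)
      set ε : ℝ := if 0 ≤ Real.cos δ then 1 else -1 with hε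
      have hεw : ε * Real.cos δ = |Real.cos δ| := by
        rcases le_or_gt 0 (Real.cos δ) with h|h
        · rw [hε, if_pos h, one_mul]; exact (_root_.abs_of_nonneg h).symm
        · rw [hε, if_neg (not_le.mpr h), _root_.abs_of_neg h]; ring
      have hε2 : ε^2 = 1 := by rw [hε]; split <;> norm_num
      have hεabs : |ε| = 1 := by rw [hε]; split <;> simp
      have hsqXpos : 0 < Real.sqrt X := Real.sqrt_pos.mpr hXpos
      set T := 2*Real.sqrt X with hT
      have hTpos : 0 < T := by rw [hT]; linarith
      have hT2 : T^2 = 4*X := by rw [hT, mul_pow, Real.sq_sqrt hXnn]; ring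
      set P := 2*r + 2*s*(ε*Real.cos δ) with hP
      set Q := -(2*s*(ε*Real.sin δ)) with hQ
      have h2 := Real.sin_sq_add_cos_sq δ
      have hPQ : P^2 + Q^2 = 4*X := by
        rw [hP, hQ, hX, ← hεw]
        linear_combination (4*s^2*ε^2)*h2 + (4*s^2)*hε2
      have hunit : (P/T)^2 + (Q/T)^2 = 1 := by
        field_simp
        linear_combination hPQ - hT2
      obtain ⟨θ, hcos, hsin⟩ := exists_cos_sin hunit
      refine ⟨2*θ - α, ?_⟩
      apply le_antisymm (hub _)
      have harg : ((2*θ - α) + α)/2 = θ := by ring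
      rw [harg]
      have key : P * Real.cos θ + Q * Real.sin θ = T := by
        rw [hcos, hsin]
        field_simp
        linear_combination hPQ - hT2
      have hlow1 : 2*r*Real.cos θ ≤ 2*r*|Real.cos θ| := by
        exact mul_le_mul_of_nonneg_left (le_abs_self _) (by linarith)
      have hlow2 : 2*s*(ε*Real.cos (θ+δ)) ≤ 2*s*|Real.cos (θ+δ)| := by
        have h' : ε*Real.cos (θ+δ) ≤ |Real.cos (θ+δ)| := by
          calc ε*Real.cos (θ+δ) ≤ |ε*Real.cos (θ+δ)| := le_abs_self _
            _ = |Real.cos (θ+δ)| := by rw [abs_mul, hεabs, one_mul]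
        exact mul_le_mul_of_nonneg_left h' (by linarith)
      have hexp : 2*r*Real.cos θ + 2*s*(ε*Real.cos (θ+δ)) = P*Real.cos θ + Q*Real.sin θ := by
        rw [hP, hQ, Real.cos_add]; ring
      linarith
  · rintro y ⟨σ, rfl⟩; exact hub σ

lemma core_mixed (A B C D r s α β : ℝ) (hr : 0 ≤ r) (hs : 0 ≤ s)
    (hAB : A*B = r*s) (hAB2 : A^2+B^2 = r^2+s^2) (hCD : C*D = r*s) (hCD2 : C^2+D^2 = r^2+s^2) :
    IsGreatest (Set.range fun σ => Real.sqrt (A^2+B^2+2*A*B*Real.cos (σ+α)) +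
        Real.sqrt (C^2+D^2+2*C*D*Real.cos (σ+β)))
      (2*Real.sqrt (r^2+s^2+2*r*s*|Real.cos ((α-β)/2)|)) := by
  have heq : (fun σ => Real.sqrt (A^2+B^2+2*A*B*Real.cos (σ+α)) +
      Real.sqrt (C^2+D^2+2*C*D*Real.cos (σ+β)))
      = fun σ => Real.sqrt (r^2+s^2+2*(r*s)*Real.cos (σ+α)) +
          Real.sqrt (r^2+s^2+2*(r*s)*Real.cos (σ+β)) := by
    funext σ
    rw [show A^2+B^2+2*A*B*Real.cos (σ+α) = r^2+s^2+2*(r*s)*Real.cos (σ+α) by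
        linear_combination hAB2 + 2*Real.cos (σ+α) * hAB,
      show C^2+D^2+2*C*D*Real.cos (σ+β) = r^2+s^2+2*(r*s)*Real.cos (σ+β) by
        linear_combination hCD2 + 2*Real.cos (σ+β) * hCD]
  rw [heq]
  have hrad : ∀ x:ℝ, 0 ≤ r^2+s^2+2*(r*s)*Real.cos x := by
    intro x
    nlinarith [Real.neg_one_le_cos x, Real.cos_le_one x, sq_nonneg (r-s), sq_nonneg (r+s),
      mul_nonneg hr hs]
  set X := r^2+s^2+2*r*s*|Real.cos ((α-β)/2)| with hX
  have hXnn : 0 ≤ X := by positivity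
  have hs4 : Real.sqrt (4*X) = 2*Real.sqrt X := by
    rw [show (4:ℝ)*X = 2^2*X by ring, Real.sqrt_mul (by positivity), Real.sqrt_sq (by norm_num)]
  have hub : ∀ σ:ℝ, Real.sqrt (r^2+s^2+2*(r*s)*Real.cos (σ+α)) +
      Real.sqrt (r^2+s^2+2*(r*s)*Real.cos (σ+β)) ≤ 2*Real.sqrt X := by
    intro σ
    set gu := Real.sqrt (r^2+s^2+2*(r*s)*Real.cos (σ+α)) with hgu
    set gv := Real.sqrt (r^2+s^2+2*(r*s)*Real.cos (σ+β)) with hgv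
    have hgu0 : 0 ≤ gu := Real.sqrt_nonneg _
    have hgv0 : 0 ≤ gv := Real.sqrt_nonneg _
    have hgu2 : gu^2 = r^2+s^2+2*(r*s)*Real.cos (σ+α) := Real.sq_sqrt (hrad _)
    have hgv2 : gv^2 = r^2+s^2+2*(r*s)*Real.cos (σ+β) := Real.sq_sqrt (hrad _)
    have hcc : Real.cos (σ+α) + Real.cos (σ+β)
        = 2 * Real.cos (((σ+α)+(σ+β))/2) * Real.cos (((σ+α)-(σ+β))/2) := Real.cos_add_cos _ _
    have hhalf : ((σ+α)-(σ+β))/2 = (α-β)/2 := by ring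
    rw [hhalf] at hcc
    have hbd : Real.cos (((σ+α)+(σ+β))/2) * Real.cos ((α-β)/2) ≤ |Real.cos ((α-β)/2)| := by
      calc Real.cos (((σ+α)+(σ+β))/2) * Real.cos ((α-β)/2)
          ≤ |Real.cos (((σ+α)+(σ+β))/2) * Real.cos ((α-β)/2)| := le_abs_self _
        _ = |Real.cos (((σ+α)+(σ+β))/2)| * |Real.cos ((α-β)/2)| := abs_mul _ _
        _ ≤ 1 * |Real.cos ((α-β)/2)| :=
            mul_le_mul_of_nonneg_right (Real.abs_cos_le_one _) (abs_nonneg _)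
        _ = |Real.cos ((α-β)/2)| := one_mul _
    have hsq : (gu + gv)^2 ≤ 4*X := by
      rw [hX]
      have h1 : (gu-gv)^2 ≥ 0 := sq_nonneg _
      have hrs : 0 ≤ r*s := mul_nonneg hr hs
      have := mul_le_mul_of_nonneg_left hbd (by linarith : (0:ℝ) ≤ 4*(r*s))
      have hcc' : 2*(r*s)*Real.cos (σ+α) + 2*(r*s)*Real.cos (σ+β)
          = 4*(r*s)*(Real.cos (((σ+α)+(σ+β))/2) * Real.cos ((α-β)/2)) := by
        linear_combination 2*(r*s)*hcc
      nlinarith [hgu2, hgv2, hcc', hX, h1, this]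
    calc gu + gv = Real.sqrt ((gu+gv)^2) := (Real.sqrt_sq (by linarith)).symm
      _ ≤ Real.sqrt (4*X) := Real.sqrt_le_sqrt hsq
      _ = 2*Real.sqrt X := hs4
  constructor
  · rcases le_or_gt 0 (Real.cos ((α-β)/2)) with hc|hc
    · refine ⟨-((α+β)/2), ?_⟩
      have e1 : -((α+β)/2) + α = (α-β)/2 := by ring
      have e2 : -((α+β)/2) + β = -((α-β)/2) := by ring
      simp only [e1, e2, Real.cos_neg]
      rw [hX, _root_.abs_of_nonneg hc]
      rw [show r^2+s^2+2*r*s*Real.cos ((α-β)/2) = r^2+s^2+2*(r*s)*Real.cos ((α-β)/2) by ring]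
      ring
    · refine ⟨Real.pi - ((α+β)/2), ?_⟩
      have e1 : Real.pi - ((α+β)/2) + α = Real.pi - (-((α-β)/2)) := by ring
      have e2 : Real.pi - ((α+β)/2) + β = Real.pi - ((α-β)/2) := by ring
      simp only [e1, e2, Real.cos_pi_sub, Real.cos_neg]
      rw [hX, _root_.abs_of_neg hc]
      rw [show r^2+s^2+2*r*s*(-Real.cos ((α-β)/2)) = r^2+s^2+2*(r*s)*(-Real.cos ((α-β)/2)) by ring]
      ring
  · rintro y ⟨σ, rfl⟩; exact hub σ

noncomputable def Xfun (z : Fin 4 → ℂ) (σ : ℝ) : ℝ :=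
  ‖z 0 * Complex.exp (σ * Complex.I) + (starRingEnd ℂ) (z 3)‖ +
  ‖z 1 * Complex.exp (σ * Complex.I) + (starRingEnd ℂ) (z 2)‖

noncomputable def Xnorm (z : Fin 4 → ℂ) : ℝ := ⨆ σ : ℝ, Xfun z σ

noncomputable def phase (z : Fin 4 → ℂ) : ℝ :=
  (Complex.arg (z 0) + Complex.arg (z 3)) - (Complex.arg (z 1) + Complex.arg (z 2))

lemma main_all (z : Fin 4 → ℂ) (r s : ℝ) (hr : 0 ≤ r) (hs : 0 ≤ s)
    (hcase : (‖z 0‖ = r ∧ ‖z 3‖ = r ∧ ‖z 1‖ = s ∧ ‖z 2‖ = s)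
      ∨ (‖z 0‖ = s ∧ ‖z 3‖ = s ∧ ‖z 1‖ = r ∧ ‖z 2‖ = r)
      ∨ (((‖z 0‖ = r ∧ ‖z 3‖ = s) ∨ (‖z 0‖ = s ∧ ‖z 3‖ = r))
         ∧ ((‖z 1‖ = r ∧ ‖z 2‖ = s) ∨ (‖z 1‖ = s ∧ ‖z 2‖ = r)))) :
    Xnorm z = 2 * Real.sqrt (r ^ 2 + s ^ 2 + 2 * r * s * |Real.cos (phase z / 2)|) := by
  have hXfun : ∀ σ, Xfun z σ =
      Real.sqrt ((‖z 0‖)^2 + (‖z 3‖)^2 +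
        2*‖z 0‖*‖z 3‖*Real.cos (σ+(Complex.arg (z 0) + Complex.arg (z 3)))) +
      Real.sqrt ((‖z 1‖)^2 + (‖z 2‖)^2 +
        2*‖z 1‖*‖z 2‖*Real.cos (σ+(Complex.arg (z 1) + Complex.arg (z 2)))) := by
    intro σ
    rw [Xfun, term_eq, term_eq]
  have hph : phase z / 2 = ((Complex.arg (z 0) + Complex.arg (z 3)) - (Complex.arg (z 1) + Complex.arg (z 2)))/2 := by
    rw [phase]
  rw [Xnorm, hph]
  simp only [hXfun]
  rcases hcase with ⟨e0, e3, e1, e2⟩ | ⟨e0, e3, e1, e2⟩ | ⟨h03, h12⟩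
  · simp only [e0, e1, e2, e3]
    exact (core_aligned r s _ _ hr hs).csSup_eq
  · simp only [e0, e1, e2, e3]
    rw [show r^2+s^2+2*r*s*|Real.cos (((Complex.arg (z 0) + Complex.arg (z 3)) - (Complex.arg (z 1) + Complex.arg (z 2)))/2)|
        = s^2+r^2+2*s*r*|Real.cos (((Complex.arg (z 0) + Complex.arg (z 3)) - (Complex.arg (z 1) + Complex.arg (z 2)))/2)| by ring]
    exact (core_aligned s r _ _ hs hr).csSup_eq
  · have p1 : ‖z 0‖ * ‖z 3‖ = r * s := by
      rcases h03 with ⟨ea, eb⟩ | ⟨ea, eb⟩ <;> rw [ea, eb] <;> ring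
    have p2 : (‖z 0‖)^2 + (‖z 3‖)^2 = r^2 + s^2 := by
      rcases h03 with ⟨ea, eb⟩ | ⟨ea, eb⟩ <;> rw [ea, eb] <;> ring
    have p3 : ‖z 1‖ * ‖z 2‖ = r * s := by
      rcases h12 with ⟨ea, eb⟩ | ⟨ea, eb⟩ <;> rw [ea, eb] <;> ring
    have p4 : (‖z 1‖)^2 + (‖z 2‖)^2 = r^2 + s^2 := by
      rcases h12 with ⟨ea, eb⟩ | ⟨ea, eb⟩ <;> rw [ea, eb] <;> ring
    exact (core_mixed (‖z 0‖) (‖z 3‖) (‖z 1‖) (‖z 2‖)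
      r s _ _ hr hs p1 p2 p3 p4).csSup_eq

set_option maxHeartbeats 2000000 in
theorem stmt_11 (z : Fin 4 → ℂ) (r s : ℝ) (i₁ i₂ i₃ i₄ : Fin 4)
    (hpart : ({i₁, i₂, i₃, i₄} : Finset (Fin 4)) = Finset.univ)
    (h12 : i₁ ≠ i₂) (h34 : i₃ ≠ i₄)
    (h1 : ‖z i₁‖ = r) (h2 : ‖z i₂‖ = r)
    (h3 : ‖z i₃‖ = s) (h4 : ‖z i₄‖ = s) :
    Xnorm z = 2 * Real.sqrt (r ^ 2 + s ^ 2 + 2 * r * s * |Real.cos (phase z / 2)|) := by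
  have hr : 0 ≤ r := by rw [← h1]; positivity
  have hs : 0 ≤ s := by rw [← h3]; positivity
  have hcov : ∀ k : Fin 4, k = i₁ ∨ k = i₂ ∨ k = i₃ ∨ k = i₄ := by
    intro k
    have hk : k ∈ ({i₁, i₂, i₃, i₄} : Finset (Fin 4)) := by
      rw [hpart]; exact Finset.mem_univ k
    simpa using hk
  have pigeonP : ∀ a b c : Fin 4, a ≠ b → a ≠ c → b ≠ c →
      ¬((a = i₁ ∨ a = i₂) ∧ (b = i₁ ∨ b = i₂) ∧ (c = i₁ ∨ c = i₂)) := by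
    rintro a b c hab hac hbc ⟨(rfl|rfl), (h|h), (h'|h')⟩ <;> simp_all
  have pigeonQ : ∀ a b c : Fin 4, a ≠ b → a ≠ c → b ≠ c →
      ¬((a = i₃ ∨ a = i₄) ∧ (b = i₃ ∨ b = i₄) ∧ (c = i₃ ∨ c = i₄)) := by
    rintro a b c hab hac hbc ⟨(rfl|rfl), (h|h), (h'|h')⟩ <;> simp_all
  have m : ∀ k : Fin 4, ((k = i₁ ∨ k = i₂) ∧ ‖z k‖ = r) ∨
      (¬(k = i₁ ∨ k = i₂) ∧ (k = i₃ ∨ k = i₄) ∧ ‖z k‖ = s) := by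
    intro k
    by_cases hk : k = i₁ ∨ k = i₂
    · refine Or.inl ⟨hk, ?_⟩
      rcases hk with rfl | rfl
      exacts [h1, h2]
    · have hk' : k = i₃ ∨ k = i₄ := by
        rcases hcov k with h | h | h | h
        · exact absurd (Or.inl h) hk
        · exact absurd (Or.inr h) hk
        · exact Or.inl h
        · exact Or.inr h
      refine Or.inr ⟨hk, hk', ?_⟩
      rcases hk' with rfl | rfl
      exacts [h3, h4]
  have m0 := m 0
  have m1 := m 1
  have m2 := m 2
  have m3 := m 3
  have pgP1 := pigeonP 0 1 2 (by decide) (by decide) (by decide)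
  have pgP2 := pigeonP 0 1 3 (by decide) (by decide) (by decide)
  have pgP3 := pigeonP 0 2 3 (by decide) (by decide) (by decide)
  have pgP4 := pigeonP 1 2 3 (by decide) (by decide) (by decide)
  have pgQ1 := pigeonQ 0 1 2 (by decide) (by decide) (by decide)
  have pgQ2 := pigeonQ 0 1 3 (by decide) (by decide) (by decide)
  have pgQ3 := pigeonQ 0 2 3 (by decide) (by decide) (by decide)
  have pgQ4 := pigeonQ 1 2 3 (by decide) (by decide) (by decide)
  apply main_all z r s hr hs
  rcases m0 with ⟨p0, e0⟩ | ⟨p0, q0, e0⟩ <;>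
  rcases m1 with ⟨p1, e1⟩ | ⟨p1, q1, e1⟩ <;>
  rcases m2 with ⟨p2, e2⟩ | ⟨p2, q2, e2⟩ <;>
  rcases m3 with ⟨p3, e3⟩ | ⟨p3, q3, e3⟩ <;>
  first
  | exact Or.inl (And.intro e0 (And.intro e3 (And.intro e1 e2)))
  | exact Or.inr (Or.inl (And.intro e0 (And.intro e3 (And.intro e1 e2))))
  | exact Or.inr (Or.inr (And.intro (Or.inl (And.intro e0 e3)) (Or.inl (And.intro e1 e2))))
  | exact Or.inr (Or.inr (And.intro (Or.inl (And.intro e0 e3)) (Or.inr (And.intro e1 e2))))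
  | exact Or.inr (Or.inr (And.intro (Or.inr (And.intro e0 e3)) (Or.inl (And.intro e1 e2))))
  | exact Or.inr (Or.inr (And.intro (Or.inr (And.intro e0 e3)) (Or.inr (And.intro e1 e2))))
  | exact absurd (And.intro p0 (And.intro p1 p2)) pgP1
  | exact absurd (And.intro p0 (And.intro p1 p3)) pgP2
  | exact absurd (And.intro p0 (And.intro p2 p3)) pgP3
  | exact absurd (And.intro p1 (And.intro p2 p3)) pgP4
  | exact absurd (And.intro q0 (And.intro q1 q2)) pgQ1
  | exact absurd (And.intro q0 (And.intro q1 q3)) pgQ2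
  | exact absurd (And.intro q0 (And.intro q2 q3)) pgQ3
  | exact absurd (And.intro q1 (And.intro q2 q3)) pgQ4
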